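/- For every real p > 0, every real q, and all polynomials J₁, J₂ ∈ ℝ[x₁, x₂], there exists a point x = (x₁, x₂) ∈ ℝ² such that q − p·x₁ + (J₁(x) − J₂(x))·(p·x₂ − q·x₁) < 0. (In particular, the polynomial q − p·x₁ + (J₁(x) − J₂(x))·(p·x₂ − q·x₁) cannot be nonnegative on all of ℝ².) -/
import Mathlib

/-- For every real `p > 0`, every real `q`, and all polynomials
`J₁, J₂ ∈ ℝ[x₁, x₂]`, there exists a point `x ∈ ℝ²` at which
`q - p·x₁ + (J₁(x) - J₂(x))·(p·x₂ - q·x₁)` is negative. -/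
theorem exists_neg_point (p q : ℝ) (hp : 0 < p) (J1 J2 : MvPolynomial (Fin 2) ℝ) :
    ∃ x : Fin 2 → ℝ,
      q - p * x 0 + (MvPolynomial.eval x J1 - MvPolynomial.eval x J2) *
        (p * x 1 - q * x 0) < 0 := by
  refine ⟨![(q + 1) / p, q * (q + 1) / (p * p)], ?_⟩
  have hp' := hp.ne'
  simp only [Matrix.cons_val_zero, Matrix.cons_val_one, Matrix.head_cons]
  have h1 : p * ((q + 1) / p) = q + 1 := by field_simp
  have h2 : p * (q * (q + 1) / (p * p)) - q * ((q + 1) / p) = 0 := by field_simp; ring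
  rw [h1, h2, mul_zero, add_zero]
  linarith
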